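/- arXiv:1806.06113 — 3 statements merged into one kernel-verified Lean document; each statement's English description precedes it below -/
import Mathlib

section
/- Let C > 0, T > 0, M₂ > 0, and 0 < ε ≤ 1. Suppose F : [0,T] → [0,∞) is differentiable with F(0) = 0 and F'(t) ≤ (C·M₂^ε/ε)·F(t)^{1-ε/2} + C·F(t) for all t ∈ [0,T]. Then F(t) ≤ e^{2Ct}·M₂²·(Ct/2)^{2/ε} for all t ∈ [0,T]. -/
open Real Set Filter

/-- Key step: for every `δ > 0`, `F t + δ` is controlled via linear Gronwall applied
to `(F + δ)^(ε/2)`. -/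
theorem key (C T M₂ ε : ℝ) (hC : 0 < C) (hT : 0 < T) (hM₂ : 0 < M₂)
    (hε : 0 < ε) (hε1 : ε ≤ 1)
    (F F' : ℝ → ℝ)
    (hFnonneg : ∀ t ∈ Set.Icc 0 T, 0 ≤ F t)
    (hFderiv : ∀ t ∈ Set.Icc 0 T, HasDerivAt F (F' t) t)
    (hF0 : F 0 = 0)
    (hineq : ∀ t ∈ Set.Icc 0 T,
      F' t ≤ C * M₂ ^ ε / ε * F t ^ (1 - ε / 2 : ℝ) + C * F t)
    (δ : ℝ) (hδ : 0 < δ) :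
    ∀ t ∈ Set.Icc 0 T,
      (F t + δ) ^ (ε / 2 : ℝ) ≤
        gronwallBound (δ ^ (ε / 2 : ℝ)) (ε * C / 2) (C * M₂ ^ ε / 2) t := by
  set u : ℝ → ℝ := fun t => (F t + δ) ^ (ε / 2 : ℝ) with hu
  set u' : ℝ → ℝ := fun t => (ε / 2) * (F t + δ) ^ (ε / 2 - 1 : ℝ) * F' t with hu'
  have hpos : ∀ t ∈ Set.Icc 0 T, 0 < F t + δ := fun t ht => by
    have := hFnonneg t ht; linarith
  have hud : ∀ t ∈ Set.Icc 0 T, HasDerivAt u (u' t) t := by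
    intro t ht
    have h1 : HasDerivAt (fun s => F s + δ) (F' t) t := (hFderiv t ht).add_const δ
    have h2 := h1.rpow_const (p := ε / 2) (Or.inl (ne_of_gt (hpos t ht)))
    convert h2 using 1
    simp [u']; ring
  have hcont : ContinuousOn u (Set.Icc 0 T) := fun t ht =>
    ((hud t ht).continuousAt).continuousWithinAt
  have hslope : ∀ x ∈ Set.Ico 0 T, ∀ r, u' x < r →
      ∃ᶠ z in nhdsWithin x (Set.Ioi x), (z - x)⁻¹ * (u z - u x) < r := by
    intro x hx r hr
    have hxI : x ∈ Set.Icc 0 T := Set.mem_Icc.2 ⟨hx.1, hx.2.le⟩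
    have := ((hud x hxI).hasDerivWithinAt (s := Set.Ici x)).liminf_right_slope_le hr
    refine this.mono fun z hz => ?_
    rwa [slope_def_field, div_eq_inv_mul] at hz
  have hbound : ∀ x ∈ Set.Ico 0 T, u' x ≤ ε * C / 2 * u x + C * M₂ ^ ε / 2 := by
    intro x hx
    have hxI : x ∈ Set.Icc 0 T := Set.mem_Icc.2 ⟨hx.1, hx.2.le⟩
    have hp := hpos x hxI
    have hFx := hFnonneg x hxI
    have hmul : (0:ℝ) < (ε / 2) * (F x + δ) ^ (ε / 2 - 1 : ℝ) :=
      mul_pos (by linarith) (Real.rpow_pos_of_pos hp _)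
    have h1 : u' x ≤ (ε / 2) * (F x + δ) ^ (ε / 2 - 1 : ℝ) *
        (C * M₂ ^ ε / ε * F x ^ (1 - ε / 2 : ℝ) + C * F x) := by
      exact mul_le_mul_of_nonneg_left (hineq x hxI) hmul.le
    refine h1.trans ?_
    have hA : (F x + δ) ^ (ε / 2 - 1 : ℝ) * F x ^ (1 - ε / 2 : ℝ) ≤ 1 := by
      have : F x ^ (1 - ε / 2 : ℝ) ≤ (F x + δ) ^ (1 - ε / 2 : ℝ) :=
        Real.rpow_le_rpow hFx (by linarith) (by linarith)
      calc (F x + δ) ^ (ε / 2 - 1 : ℝ) * F x ^ (1 - ε / 2 : ℝ)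
          ≤ (F x + δ) ^ (ε / 2 - 1 : ℝ) * (F x + δ) ^ (1 - ε / 2 : ℝ) :=
            mul_le_mul_of_nonneg_left this (Real.rpow_pos_of_pos hp _).le
        _ = 1 := by
            rw [← Real.rpow_add hp]; norm_num
    have hB : (F x + δ) ^ (ε / 2 - 1 : ℝ) * F x ≤ u x := by
      calc (F x + δ) ^ (ε / 2 - 1 : ℝ) * F x
          ≤ (F x + δ) ^ (ε / 2 - 1 : ℝ) * (F x + δ) :=
            mul_le_mul_of_nonneg_left (by linarith) (Real.rpow_pos_of_pos hp _).le
        _ = u x := by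
            simp only [hu]
            have : (F x + δ) ^ (ε / 2 - 1 : ℝ) * (F x + δ)
                = (F x + δ) ^ (ε / 2 - 1 + 1 : ℝ) := by
              rw [Real.rpow_add hp, Real.rpow_one]
            rw [this]; norm_num
    have hM : (0:ℝ) ≤ M₂ ^ ε := (Real.rpow_pos_of_pos hM₂ ε).le
    have expand : (ε / 2) * (F x + δ) ^ (ε / 2 - 1 : ℝ) *
        (C * M₂ ^ ε / ε * F x ^ (1 - ε / 2 : ℝ) + C * F x)
        = (C * M₂ ^ ε / 2) * ((F x + δ) ^ (ε / 2 - 1 : ℝ) * F x ^ (1 - ε / 2 : ℝ))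
          + (ε * C / 2) * ((F x + δ) ^ (ε / 2 - 1 : ℝ) * F x) := by
      field_simp
    rw [expand]
    have t1 : (C * M₂ ^ ε / 2) * ((F x + δ) ^ (ε / 2 - 1 : ℝ) * F x ^ (1 - ε / 2 : ℝ))
        ≤ C * M₂ ^ ε / 2 := by
      have hpos2 : (0:ℝ) ≤ C * M₂ ^ ε / 2 := by positivity
      calc _ ≤ (C * M₂ ^ ε / 2) * 1 := mul_le_mul_of_nonneg_left hA hpos2
        _ = C * M₂ ^ ε / 2 := mul_one _
    have t2 : (ε * C / 2) * ((F x + δ) ^ (ε / 2 - 1 : ℝ) * F x)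
        ≤ (ε * C / 2) * u x := by
      have : (0:ℝ) ≤ ε * C / 2 := by positivity
      exact mul_le_mul_of_nonneg_left hB this
    linarith
  have h0 : u 0 ≤ δ ^ (ε / 2 : ℝ) := by simp [u, hF0]
  intro t ht
  have := le_gronwallBound_of_liminf_deriv_right_le (a := 0) (b := T)
    hcont hslope h0 hbound t ht
  simpa using this

/-- Gronwall-type differential inequality from the Yudovich-style uniqueness proof:
if `F ≥ 0`, `F(0) = 0` and `F' ≤ (C M₂^ε/ε) F^{1-ε/2} + C F`, then
`F(t) ≤ e^{2Ct} M₂² (Ct/2)^{2/ε}`. -/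
theorem stmt7 (C T M₂ ε : ℝ) (hC : 0 < C) (hT : 0 < T) (hM₂ : 0 < M₂)
    (hε : 0 < ε) (hε1 : ε ≤ 1)
    (F F' : ℝ → ℝ)
    (hFnonneg : ∀ t ∈ Set.Icc 0 T, 0 ≤ F t)
    (hFderiv : ∀ t ∈ Set.Icc 0 T, HasDerivAt F (F' t) t)
    (hF0 : F 0 = 0)
    (hineq : ∀ t ∈ Set.Icc 0 T,
      F' t ≤ C * M₂ ^ ε / ε * F t ^ (1 - ε / 2 : ℝ) + C * F t) :
    ∀ t ∈ Set.Icc 0 T,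
      F t ≤ Real.exp (2 * C * t) * M₂ ^ 2 * (C * t / 2) ^ (2 / ε : ℝ) := by
  intro t ht
  set K : ℝ := ε * C / 2 with hK
  have hKpos : 0 < K := by positivity
  have hKne : K ≠ 0 := hKpos.ne'
  -- Step 1: F t ≤ ((M₂^ε/ε) * (exp (K t) - 1)) ^ (2/ε)
  have step1 : F t ≤ ((M₂ ^ ε / ε) * (Real.exp (K * t) - 1)) ^ (2 / ε : ℝ) := by
    have hfam : ∀ δ > (0:ℝ), F t + δ ≤
        (gronwallBound (δ ^ (ε / 2 : ℝ)) K (C * M₂ ^ ε / 2) t) ^ (2 / ε : ℝ) := by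
      intro δ hδ
      have hkey := key C T M₂ ε hC hT hM₂ hε hε1 F F' hFnonneg hFderiv hF0 hineq δ hδ t ht
      have hp : 0 < F t + δ := by have := hFnonneg t ht; linarith
      have := Real.rpow_le_rpow (Real.rpow_nonneg hp.le _) hkey
        (by positivity : (0:ℝ) ≤ 2 / ε)
      rwa [← Real.rpow_mul hp.le, show (ε/2) * (2/ε : ℝ) = 1 by field_simp,
        Real.rpow_one] at this
    -- take δ → 0⁺
    have hten : Tendsto (fun δ : ℝ =>
        (gronwallBound (δ ^ (ε / 2 : ℝ)) K (C * M₂ ^ ε / 2) t) ^ (2 / ε : ℝ) - δ)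
        (nhdsWithin 0 (Set.Ioi 0))
        (nhds (((M₂ ^ ε / ε) * (Real.exp (K * t) - 1)) ^ (2 / ε : ℝ))) := by
      have h1 : Tendsto (fun δ : ℝ => δ ^ (ε / 2 : ℝ)) (nhdsWithin 0 (Set.Ioi 0)) (nhds 0) := by
        have := (Real.continuousAt_rpow_const 0 (ε/2) (Or.inr (by positivity))).tendsto
        simpa [Real.zero_rpow (by positivity : (ε/2:ℝ) ≠ 0)] using
          this.mono_left nhdsWithin_le_nhds
      have h2 : Tendsto (fun d : ℝ => gronwallBound d K (C * M₂ ^ ε / 2) t) (nhds 0)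
          (nhds ((C * M₂ ^ ε / 2) / K * (Real.exp (K * t) - 1))) := by
        have : Continuous fun d : ℝ => gronwallBound d K (C * M₂ ^ ε / 2) t := by
          simp only [gronwallBound_of_K_ne_0 hKne]
          continuity
        have h0 := this.tendsto 0
        simpa [gronwallBound_of_K_ne_0 hKne] using h0
      have hbase : ((C * M₂ ^ ε / 2) / K) = M₂ ^ ε / ε := by
        rw [hK]; field_simp
      have h3 : Tendsto (fun δ : ℝ => gronwallBound (δ ^ (ε / 2 : ℝ)) K (C * M₂ ^ ε / 2) t)
          (nhdsWithin 0 (Set.Ioi 0)) (nhds ((M₂ ^ ε / ε) * (Real.exp (K * t) - 1))) := by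
        rw [← hbase]; exact h2.comp h1
      have h4 : Tendsto (fun δ : ℝ =>
          (gronwallBound (δ ^ (ε / 2 : ℝ)) K (C * M₂ ^ ε / 2) t) ^ (2 / ε : ℝ))
          (nhdsWithin 0 (Set.Ioi 0))
          (nhds (((M₂ ^ ε / ε) * (Real.exp (K * t) - 1)) ^ (2 / ε : ℝ))) := by
        have hc := (Real.continuousAt_rpow_const
          ((M₂ ^ ε / ε) * (Real.exp (K * t) - 1)) (2/ε) (Or.inr (by positivity))).tendsto
        exact hc.comp h3
      have h5 : Tendsto (fun δ : ℝ => δ) (nhdsWithin 0 (Set.Ioi 0)) (nhds 0) :=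
        tendsto_id.mono_left nhdsWithin_le_nhds
      simpa using h4.sub h5
    refine ge_of_tendsto hten ?_
    filter_upwards [self_mem_nhdsWithin] with δ hδ
    have := hfam δ hδ
    linarith
  -- Step 2: bound the limit by the target
  refine step1.trans ?_
  have htnn : 0 ≤ t := ht.1
  have hMε : (0:ℝ) < M₂ ^ ε := Real.rpow_pos_of_pos hM₂ ε
  have hexp1 : Real.exp (K * t) - 1 ≤ (K * t) * Real.exp (K * t) := by
    have h := Real.add_one_le_exp (-(K * t))
    have h2 : Real.exp (K*t) * (-(K*t)+1) ≤ Real.exp (K*t) * Real.exp (-(K*t)) :=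
      mul_le_mul_of_nonneg_left h (Real.exp_pos _).le
    rw [← Real.exp_add, add_neg_cancel, Real.exp_zero] at h2
    nlinarith [h2]
  have hexp2 : (K * t) * Real.exp (K * t) ≤ (K * t) * Real.exp (ε * C * t) := by
    have : K * t ≤ ε * C * t := by
      rw [hK]; nlinarith
    have h := Real.exp_le_exp.2 this
    exact mul_le_mul_of_nonneg_left h (by positivity)
  have hmain : (M₂ ^ ε / ε) * (Real.exp (K * t) - 1)
      ≤ M₂ ^ ε * (C * t / 2) * Real.exp (ε * C * t) := by
    have h1 : (M₂ ^ ε / ε) * (Real.exp (K * t) - 1)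
        ≤ (M₂ ^ ε / ε) * ((K * t) * Real.exp (ε * C * t)) := by
      apply mul_le_mul_of_nonneg_left (hexp1.trans hexp2) (by positivity)
    refine h1.trans (le_of_eq ?_)
    rw [hK]; field_simp
  have hLnn : 0 ≤ (M₂ ^ ε / ε) * (Real.exp (K * t) - 1) := by
    have : (1:ℝ) ≤ Real.exp (K * t) := Real.one_le_exp (by positivity)
    have hd : (0:ℝ) ≤ M₂ ^ ε / ε := by positivity
    nlinarith
  have := Real.rpow_le_rpow hLnn hmain (by positivity : (0:ℝ) ≤ 2/ε)
  refine this.trans (le_of_eq ?_)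
  have e1 : (0:ℝ) ≤ M₂ ^ ε := hMε.le
  have e2 : (0:ℝ) ≤ C * t / 2 := by positivity
  have e3 : (0:ℝ) ≤ Real.exp (ε * C * t) := (Real.exp_pos _).le
  rw [Real.mul_rpow (by positivity) e3, Real.mul_rpow e1 e2]
  rw [← Real.rpow_natCast M₂ 2, ← Real.rpow_mul hM₂.le,
    show ε * (2/ε : ℝ) = 2 by field_simp, ← Real.exp_mul,
    show ε * C * t * (2/ε : ℝ) = 2 * C * t by field_simp]
  push_cast
  ring
end

section
/- Let σ : [0,T] → [0,∞) be continuous, C > 0, M₂ > 0, and suppose for each ε ∈ (0,1], σ(t)² ≤ C·((M₂^ε/ε)·∫₀ᵗ σ(τ)^{2-ε} dτ + ∫₀ᵗ σ(τ)² dτ) for all t ∈ [0,T]. Then σ ≡ 0 on [0,T]. -/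
lemma aux_rpow9 (x δ ε : ℝ) (hx : 0 ≤ x) (hδ : 0 < δ) (hε0 : 0 < ε) (hε1 : ε ≤ 1) :
    x ^ (2 - ε : ℝ) ≤ δ ^ (-ε : ℝ) * x ^ 2 + δ ^ (2 - ε : ℝ) := by
  rcases le_or_gt x δ with h | h
  · have h1 : x ^ (2 - ε : ℝ) ≤ δ ^ (2 - ε : ℝ) := Real.rpow_le_rpow hx h (by linarith)
    have h2 : 0 ≤ δ ^ (-ε : ℝ) * x ^ 2 := by positivity
    linarith
  · have hx0 : 0 < x := hδ.trans h
    have e1 : x ^ (2 - ε : ℝ) = x ^ 2 * x ^ (-ε : ℝ) := by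
      rw [← Real.rpow_natCast x 2, ← Real.rpow_add hx0]
      ring_nf
    have h2 : x ^ (-ε : ℝ) ≤ δ ^ (-ε : ℝ) :=
      Real.rpow_le_rpow_of_nonpos hδ h.le (by linarith)
    have h3 : 0 ≤ δ ^ (2 - ε : ℝ) := Real.rpow_nonneg hδ.le _
    nlinarith [sq_nonneg x]


set_option maxHeartbeats 1000000 in
/-- Integral-inequality form of the Yudovich uniqueness lemma: if for every
`ε ∈ (0,1]`, `σ(t)² ≤ C((M₂^ε/ε)∫₀ᵗ σ^{2-ε} + ∫₀ᵗ σ²)`, then `σ ≡ 0` on `[0,T]`. -/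
theorem stmt9 (C M₂ T : ℝ) (hC : 0 < C) (hM₂ : 0 < M₂) (hT : 0 < T)
    (σ : ℝ → ℝ) (hσcont : ContinuousOn σ (Set.Icc 0 T))
    (hσnonneg : ∀ t ∈ Set.Icc 0 T, 0 ≤ σ t)
    (hineq : ∀ ε ∈ Set.Ioc (0 : ℝ) 1, ∀ t ∈ Set.Icc 0 T,
      σ t ^ 2 ≤ C * ((M₂ ^ ε / ε) * (∫ τ in (0 : ℝ)..t, σ τ ^ (2 - ε : ℝ)) +
        ∫ τ in (0 : ℝ)..t, σ τ ^ 2)) :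
    ∀ t ∈ Set.Icc 0 T, σ t = 0 := by
  set f : ℝ → ℝ := Set.IccExtend hT.le ((Set.Icc 0 T).restrict σ) with hfdef
  have hf_cont : Continuous f := hσcont.restrict.Icc_extend'
  have hf_eq : ∀ t ∈ Set.Icc 0 T, f t = σ t := by
    intro t ht
    rw [hfdef, Set.IccExtend_of_mem hT.le _ ht]; rfl
  have hf_nonneg : ∀ t, 0 ≤ f t := by
    intro t
    exact hσnonneg _ (Set.projIcc 0 T hT.le t).2
  have hf2_cont : Continuous (fun t => f t ^ 2) := hf_cont.pow 2
  have hInt : ∀ a b : ℝ, IntervalIntegrable (fun τ => f τ ^ 2) MeasureTheory.volume a b :=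
    fun a b => hf2_cont.intervalIntegrable a b
  set u : ℝ → ℝ := fun t => ∫ τ in (0:ℝ)..t, f τ ^ 2 with hudef
  have hu_deriv : ∀ t : ℝ, HasDerivAt u (f t ^ 2) t := fun t =>
    intervalIntegral.integral_hasDerivAt_right (hInt 0 t)
      (hf2_cont.stronglyMeasurableAtFilter _ _) hf2_cont.continuousAt
  have hu_cont : Continuous u := by
    rw [continuous_iff_continuousAt]; exact fun t => (hu_deriv t).continuousAt
  have hu_mono : Monotone u := by
    intro a b hab
    have h1 := intervalIntegral.integral_add_adjacent_intervals (hInt 0 a) (hInt a b)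
    have h0 : 0 ≤ ∫ τ in a..b, f τ ^ 2 :=
      intervalIntegral.integral_nonneg hab (fun x _ => sq_nonneg _)
    simp only [hudef]
    linarith
  have hu0 : u 0 = 0 := intervalIntegral.integral_same
  have hu_nonneg : ∀ t, 0 ≤ t → 0 ≤ u t := by
    intro t ht
    have := hu_mono ht
    rwa [hu0] at this
  obtain ⟨tm, htm, htmax⟩ := isCompact_Icc.exists_isMaxOn (Set.nonempty_Icc.mpr hT.le)
    (hf2_cont.continuousOn : ContinuousOn (fun t => f t ^ 2) (Set.Icc 0 T))
  set S : ℝ := f tm ^ 2 with hSdef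
  have hS_nonneg : 0 ≤ S := sq_nonneg _
  have hS : ∀ t ∈ Set.Icc 0 T, f t ^ 2 ≤ S := fun t ht => htmax ht
  have hu_le : ∀ t ∈ Set.Icc 0 T, u t ≤ T * S := by
    intro t ht
    have h1 : u t ≤ ∫ _ in (0:ℝ)..t, S :=
      intervalIntegral.integral_mono_on ht.1 (hInt 0 t) intervalIntegrable_const
        (fun x hx => hS x ⟨hx.1, hx.2.trans ht.2⟩)
    rw [intervalIntegral.integral_const, smul_eq_mul, sub_zero] at h1
    nlinarith [ht.2, ht.1]
  set N : ℝ := max M₂ 1 with hNdef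
  have hN1 : (1:ℝ) ≤ N := le_max_right _ _
  have hN0 : 0 < N := lt_of_lt_of_le one_pos hN1
  set B : ℝ := Real.exp 2 * (N ^ 2 + T * S + 1) with hBdef
  have hB_pos : 0 < B := by positivity
  set K : ℝ := 2 * C * (1 + T) with hKdef
  have hK_pos : 0 < K := by positivity
  have hexp2 : (1:ℝ) ≤ Real.exp 2 := Real.one_le_exp (by norm_num)
  have hineq' : ∀ ε ∈ Set.Ioc (0:ℝ) 1, ∀ t ∈ Set.Icc 0 T,
      f t ^ 2 ≤ C * ((M₂ ^ ε / ε) * (∫ τ in (0:ℝ)..t, f τ ^ (2 - ε : ℝ)) + u t) := by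
    intro ε hε t ht
    have hsub : Set.uIcc (0:ℝ) t ⊆ Set.Icc 0 T := by
      rw [Set.uIcc_of_le ht.1]
      exact Set.Icc_subset_Icc le_rfl ht.2
    have e1 : (∫ τ in (0:ℝ)..t, f τ ^ (2-ε:ℝ)) = ∫ τ in (0:ℝ)..t, σ τ ^ (2-ε:ℝ) :=
      intervalIntegral.integral_congr (fun x hx => by rw [hf_eq x (hsub hx)])
    have e2 : u t = ∫ τ in (0:ℝ)..t, σ τ ^ 2 :=
      intervalIntegral.integral_congr (fun x hx => by rw [hf_eq x (hsub hx)])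
    rw [hf_eq t ht, e1, e2]
    exact hineq ε hε t ht
  have hrpow_cont : ∀ p : ℝ, 0 < p → Continuous (fun τ => f τ ^ (p:ℝ)) := by
    intro p hp
    rw [continuous_iff_continuousAt]
    intro t
    exact (Real.continuousAt_rpow_const _ _ (Or.inr hp.le)).comp hf_cont.continuousAt
  have hL2 : ∀ x : ℝ, 0 < x → x ≤ T * S → 2 ≤ Real.log (B / x) := by
    intro x hx hxle
    have h1 : Real.exp 2 * x ≤ B := by
      rw [hBdef]
      have h2 : x ≤ N ^ 2 + T * S + 1 := by nlinarith
      nlinarith [Real.exp_pos 2]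
    have h2 : Real.exp 2 ≤ B / x := (le_div_iff₀ hx).mpr h1
    calc (2:ℝ) = Real.log (Real.exp 2) := (Real.log_exp 2).symm
    _ ≤ Real.log (B / x) := Real.log_le_log (Real.exp_pos 2) h2
  have hkey : ∀ t ∈ Set.Icc 0 T, 0 < u t →
      f t ^ 2 ≤ K * (u t * Real.log (B / u t)) := by
    intro t ht hut
    set x := u t with hxdef
    set Lg := Real.log (B / x) with hLgdef
    have hL : 2 ≤ Lg := hL2 x hut (hu_le t ht)
    have hLpos : 0 < Lg := by linarith
    set ε := 2 / Lg with hεdef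
    have hε0 : 0 < ε := by positivity
    have hε1 : ε ≤ 1 := by rw [hεdef, div_le_one hLpos]; linarith
    have hεL : ε * Lg = 2 := by rw [hεdef]; field_simp
    set δ := Real.sqrt x with hδdef
    have hδpos : 0 < δ := Real.sqrt_pos.mpr hut
    have hδ2 : δ ^ (2 - ε:ℝ) = x * δ ^ (-ε:ℝ) := by
      have h1 : δ ^ (2 - ε:ℝ) = δ ^ (2:ℝ) * δ ^ (-ε:ℝ) := by
        rw [← Real.rpow_add hδpos]; ring_nf
      rw [h1]
      congr 1
      rw [show (2:ℝ) = ((2:ℕ):ℝ) by norm_num, Real.rpow_natCast]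
      exact Real.sq_sqrt hut.le
    have hJ : (∫ τ in (0:ℝ)..t, f τ ^ (2 - ε:ℝ)) ≤ (1 + T) * (x * δ ^ (-ε:ℝ)) := by
      have hmono : (∫ τ in (0:ℝ)..t, f τ ^ (2-ε:ℝ)) ≤
          ∫ τ in (0:ℝ)..t, (δ ^ (-ε:ℝ) * f τ ^ 2 + δ ^ (2-ε:ℝ)) := by
        apply intervalIntegral.integral_mono_on ht.1
        · exact (hrpow_cont (2-ε) (by linarith)).intervalIntegrable _ _
        · exact ((continuous_const.mul hf2_cont).add continuous_const).intervalIntegrable _ _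
        · intro τ _
          exact aux_rpow9 (f τ) δ ε (hf_nonneg τ) hδpos hε0 hε1
      have e3 : (∫ τ in (0:ℝ)..t, (δ ^ (-ε:ℝ) * f τ ^ 2 + δ ^ (2-ε:ℝ)))
          = δ ^ (-ε:ℝ) * x + t * δ ^ (2-ε:ℝ) := by
        rw [intervalIntegral.integral_add (show IntervalIntegrable (fun τ => δ ^ (-ε:ℝ) * f τ ^ 2)
          MeasureTheory.volume 0 t from (continuous_const.mul hf2_cont).intervalIntegrable 0 t)
          intervalIntegrable_const, intervalIntegral.integral_const_mul,
          intervalIntegral.integral_const, smul_eq_mul, sub_zero]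
      rw [e3, hδ2] at hmono
      have h4 : t * (x * δ ^ (-ε:ℝ)) ≤ T * (x * δ ^ (-ε:ℝ)) := by
        have h5 : 0 ≤ x * δ ^ (-ε:ℝ) := by positivity
        nlinarith [ht.2]
      nlinarith
    have hBx_pos : 0 < B / x := div_pos hB_pos hut
    have hMδ : M₂ ^ ε * δ ^ (-ε:ℝ) ≤ 3 := by
      have h1 : M₂ ^ ε * δ ^ (-ε:ℝ) = (M₂ / δ) ^ ε := by
        rw [Real.div_rpow hM₂.le hδpos.le, Real.rpow_neg hδpos.le, div_eq_mul_inv]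
      have hNB : N ≤ Real.sqrt B := by
        rw [show N = Real.sqrt (N^2) by rw [Real.sqrt_sq hN0.le]]
        apply Real.sqrt_le_sqrt
        rw [hBdef]
        have h8 : (0:ℝ) ≤ N ^ 2 + T * S + 1 := by positivity
        nlinarith [mul_le_mul_of_nonneg_right hexp2 h8, mul_nonneg hT.le hS_nonneg]
      have h2 : (M₂ / δ) ^ ε ≤ (Real.sqrt B / δ) ^ ε := by
        apply Real.rpow_le_rpow (by positivity) _ hε0.le
        gcongr
        exact le_trans (le_max_left M₂ 1) hNB
      have h3 : Real.sqrt B / δ = Real.sqrt (B / x) := (Real.sqrt_div hB_pos.le x).symm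
      have h4 : Real.sqrt (B / x) ^ ε = (B / x) ^ (ε / 2 : ℝ) := by
        rw [Real.sqrt_eq_rpow, ← Real.rpow_mul hBx_pos.le]
        ring_nf
      have h5 : (B / x) ^ (ε / 2 : ℝ) = Real.exp 1 := by
        rw [Real.rpow_def_of_pos hBx_pos, ← hLgdef]
        rw [show Lg * (ε / 2) = 1 by rw [mul_comm] at hεL ⊢; nlinarith]
      have h6 : Real.exp 1 ≤ 3 := by
        have := Real.exp_one_lt_d9
        linarith
      rw [h1]
      calc (M₂ / δ) ^ ε ≤ (Real.sqrt B / δ) ^ ε := h2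
      _ = Real.exp 1 := by rw [h3, h4, h5]
      _ ≤ 3 := h6
    -- assemble
    have step1 : f t ^ 2 ≤ C * ((M₂ ^ ε / ε) * ((1+T) * (x * δ ^ (-ε:ℝ))) + x) := by
      refine le_trans (hineq' ε ⟨hε0, hε1⟩ t ht) ?_
      gcongr
    have hinv : 1 / ε = Lg / 2 := by
      rw [hεdef]; field_simp
    have step2 : (M₂ ^ ε / ε) * ((1+T) * (x * δ ^ (-ε:ℝ))) ≤ (1+T) * x * 3 * (Lg / 2) := by
      have e4 : (M₂ ^ ε / ε) * ((1+T) * (x * δ ^ (-ε:ℝ)))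
          = ((1+T) * x) * (M₂ ^ ε * δ ^ (-ε:ℝ)) * (1 / ε) := by ring
      rw [e4, hinv]
      have h7 : 0 ≤ (1+T) * x := by positivity
      nlinarith [mul_le_mul_of_nonneg_right hMδ (mul_nonneg h7 (by positivity : (0:ℝ) ≤ Lg / 2))]
    have hxLg : x ≤ (1+T) * x * (Lg / 2) := by
      have h9 : 2 ≤ (1+T) * Lg := by nlinarith
      nlinarith [mul_le_mul_of_nonneg_left h9 hut.le]
    calc f t ^ 2 ≤ C * ((M₂ ^ ε / ε) * ((1+T) * (x * δ ^ (-ε:ℝ))) + x) := step1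
    _ ≤ C * ((1+T) * x * 3 * (Lg / 2) + (1+T) * x * (Lg / 2)) := by
        apply mul_le_mul_of_nonneg_left _ hC.le
        linarith
    _ = K * (x * Lg) := by rw [hKdef]; ring
  have hu_zero : ∀ t ∈ Set.Icc 0 T, u t = 0 := by
    by_contra hcon
    push_neg at hcon
    obtain ⟨t₁, ht₁, hne⟩ := hcon
    have hupos : 0 < u t₁ := lt_of_le_of_ne (hu_nonneg t₁ ht₁.1) (Ne.symm hne)
    set Z := {t | t ∈ Set.Icc 0 t₁ ∧ u t = 0} with hZdef
    have hZne : Z.Nonempty := ⟨0, ⟨le_rfl, ht₁.1⟩, hu0⟩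
    have hZbdd : BddAbove Z := ⟨t₁, fun z hz => hz.1.2⟩
    have hZclosed : IsClosed Z := by
      have hZeq : Z = Set.Icc 0 t₁ ∩ u ⁻¹' {0} := by ext z; simp [hZdef]
      rw [hZeq]; exact isClosed_Icc.inter (isClosed_singleton.preimage hu_cont)
    set t₀ := sSup Z with ht₀def
    have ht₀Z : t₀ ∈ Z := hZclosed.csSup_mem hZne hZbdd
    have ht₀0 : 0 ≤ t₀ := ht₀Z.1.1
    have hut₀ : u t₀ = 0 := ht₀Z.2
    have ht₀1 : t₀ < t₁ :=
      lt_of_le_of_ne ht₀Z.1.2 (fun h => by rw [h] at hut₀; exact hne hut₀)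
    have hposIoc : ∀ t ∈ Set.Ioc t₀ t₁, 0 < u t := by
      intro t htI
      rcases lt_or_eq_of_le (hu_nonneg t (ht₀0.trans htI.1.le)) with h | h
      · exact h
      · exfalso
        have hmemZ : t ∈ Z := ⟨⟨ht₀0.trans htI.1.le, htI.2⟩, h.symm⟩
        exact absurd (le_csSup hZbdd hmemZ) (not_le.mpr htI.1)
    set L : ℝ → ℝ := fun t => Real.log B - Real.log (u t) with hLdef2
    set g : ℝ → ℝ := fun t => Real.log (L t) + K * t with hgdef
    have hIccT : Set.Icc t₀ t₁ ⊆ Set.Icc 0 T := Set.Icc_subset_Icc ht₀0 ht₁.2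
    have hLlog : ∀ t ∈ Set.Ioc t₀ t₁, L t = Real.log (B / u t) := by
      intro t htI
      simp only [hLdef2]
      rw [Real.log_div hB_pos.ne' (hposIoc t htI).ne']
    have hL2' : ∀ t ∈ Set.Ioc t₀ t₁, 2 ≤ L t := by
      intro t htI
      rw [hLlog t htI]
      exact hL2 (u t) (hposIoc t htI) (hu_le t (hIccT ⟨htI.1.le, htI.2⟩))
    have hg_deriv : ∀ t ∈ Set.Ioo t₀ t₁, HasDerivAt g (K - f t ^ 2 / (u t * L t)) t := by
      intro t htI
      have hutpos := hposIoc t ⟨htI.1, htI.2.le⟩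
      have hLt := hL2' t ⟨htI.1, htI.2.le⟩
      have h1 : HasDerivAt L (-(f t ^ 2 / u t)) t := by
        exact ((hasDerivAt_const t (Real.log B)).sub ((hu_deriv t).log hutpos.ne')).congr_deriv (by simp)
      have h2 : HasDerivAt (fun s => Real.log (L s)) (-(f t ^ 2 / u t) / L t) t :=
        h1.log (by linarith)
      have h3 := h2.add ((hasDerivAt_id t).const_mul K)
      exact h3.congr_deriv (by ring)
    have hcomp : ∀ s ∈ Set.Ioo t₀ t₁, g s ≤ g t₁ := by
      intro s hs
      have hsub1 : Set.Icc s t₁ ⊆ Set.Ioc t₀ t₁ := fun z hz => ⟨lt_of_lt_of_le hs.1 hz.1, hz.2⟩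
      have hsub2 : Set.Ioo s t₁ ⊆ Set.Ioo t₀ t₁ := fun z hz => ⟨hs.1.trans hz.1, hz.2⟩
      have hcont : ContinuousOn g (Set.Icc s t₁) := by
        intro z hz
        have hz' := hsub1 hz
        have hzpos := hposIoc z hz'
        have hLz := hL2' z hz'
        apply ContinuousAt.continuousWithinAt
        have hcu : ContinuousAt (fun w => Real.log (u w)) z :=
          (Real.continuousAt_log hzpos.ne').comp hu_cont.continuousAt
        have hcL : ContinuousAt L z := continuousAt_const.sub hcu
        exact ((Real.continuousAt_log (by linarith)).comp hcL).add
          ((continuous_const.mul continuous_id).continuousAt)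
      have hdiff : DifferentiableOn ℝ g (interior (Set.Icc s t₁)) := by
        rw [interior_Icc]
        exact fun z hz => ((hg_deriv z (hsub2 hz)).differentiableAt).differentiableWithinAt
      have hderiv_nonneg : ∀ z ∈ interior (Set.Icc s t₁), 0 ≤ deriv g z := by
        rw [interior_Icc]
        intro z hz
        have hz' := hsub2 hz
        rw [(hg_deriv z hz').deriv]
        have hzpos := hposIoc z ⟨hz'.1, hz'.2.le⟩
        have hLz := hL2' z ⟨hz'.1, hz'.2.le⟩
        have hk := hkey z (hIccT ⟨hz'.1.le, hz'.2.le⟩) hzpos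
        rw [← hLlog z ⟨hz'.1, hz'.2.le⟩] at hk
        have hpos2 : 0 < u z * L z := mul_pos hzpos (by linarith)
        rw [sub_nonneg, div_le_iff₀ hpos2]
        exact hk
      have hmono := monotoneOn_of_deriv_nonneg (convex_Icc s t₁) hcont hdiff hderiv_nonneg
      exact hmono (Set.left_mem_Icc.mpr hs.2.le) (Set.right_mem_Icc.mpr hs.2.le) hs.2.le
    -- choose s close to t₀ to get a contradiction
    set A := Real.log (L t₁) + K * t₁ with hAdef
    set η := B * Real.exp (-(Real.exp A)) with hηdef
    have hη_pos : 0 < η := by positivity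
    obtain ⟨δ', hδ'pos, hδ'⟩ := Metric.continuousAt_iff.mp hu_cont.continuousAt η hη_pos
    set s := min (t₀ + δ' / 2) ((t₀ + t₁) / 2) with hsdef
    have hs1 : t₀ < s := by
      rw [hsdef]; apply lt_min <;> linarith
    have hs2 : s < t₁ := lt_of_le_of_lt (min_le_right _ _) (by linarith)
    have hsd : dist s t₀ < δ' := by
      rw [Real.dist_eq, abs_of_nonneg (by linarith : (0:ℝ) ≤ s - t₀)]
      have h10 : s ≤ t₀ + δ' / 2 := min_le_left _ _
      linarith
    have hus : u s < η := by
      have h11 := hδ' hsd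
      rw [Real.dist_eq, hut₀, sub_zero] at h11
      exact lt_of_le_of_lt (le_abs_self _) h11
    have huspos : 0 < u s := hposIoc s ⟨hs1, hs2.le⟩
    have hgs := hcomp s ⟨hs1, hs2⟩
    have hLsA : Real.exp A < L s := by
      have h1 : Real.log (u s) < Real.log η := Real.log_lt_log huspos hus
      have h2 : Real.log η = Real.log B - Real.exp A := by
        rw [hηdef, Real.log_mul hB_pos.ne' (Real.exp_ne_zero _), Real.log_exp]
        ring
      simp only [hLdef2]
      linarith
    have hLspos : 0 < L s := lt_trans (Real.exp_pos A) hLsA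
    have hAlt : A < Real.log (L s) := (Real.lt_log_iff_exp_lt hLspos).mpr hLsA
    have hKs : 0 ≤ K * s := mul_nonneg hK_pos.le (by linarith)
    have hgsA : g s ≤ A := hgs
    simp only [hgdef] at hgsA
    linarith
  -- conclude σ = 0 on [0, T]
  have hIco : ∀ t ∈ Set.Ico (0:ℝ) T, σ t = 0 := by
    intro t ht
    rcases eq_or_lt_of_le ht.1 with h0 | h0
    · have h1 := hineq 1 ⟨one_pos, le_rfl⟩ 0 (Set.left_mem_Icc.mpr hT.le)
      simp only [intervalIntegral.integral_same, mul_zero, zero_add, add_zero,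
        mul_zero] at h1
      have h2 : σ 0 = 0 := by nlinarith [sq_nonneg (σ 0)]
      rw [← h0]; exact h2
    · have hmem : Set.Ioo (0:ℝ) T ∈ nhds t := Ioo_mem_nhds h0 ht.2
      have h1 : HasDerivAt u 0 t := by
        refine (hasDerivAt_const t (0:ℝ)).congr_of_eventuallyEq ?_
        filter_upwards [hmem] with z hz
        exact hu_zero z ⟨hz.1.le, hz.2.le⟩
      have h2 : f t ^ 2 = 0 := ((hu_deriv t).unique h1)
      have h3 : f t = 0 := by nlinarith [sq_nonneg (f t), sq_abs (f t)]
      rw [← hf_eq t ⟨ht.1, ht.2.le⟩]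
      exact h3
  intro t ht
  rcases eq_or_lt_of_le ht.2 with hTt | hTt
  · -- t = T : limit argument
    rw [hTt]
    have hcl : T ∈ closure (Set.Ico (0:ℝ) T) := by
      rw [closure_Ico hT.ne]
      exact ⟨hT.le, le_rfl⟩
    have hNe : (nhdsWithin T (Set.Ico (0:ℝ) T)).NeBot :=
      mem_closure_iff_nhdsWithin_neBot.mp hcl
    have h1 : Filter.Tendsto σ (nhdsWithin T (Set.Ico 0 T)) (nhds (σ T)) :=
      (hσcont T (Set.right_mem_Icc.mpr hT.le)).mono_left
        (nhdsWithin_mono T Set.Ico_subset_Icc_self)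
    have h2 : Filter.Tendsto σ (nhdsWithin T (Set.Ico 0 T)) (nhds 0) := by
      apply Filter.Tendsto.congr' _ tendsto_const_nhds
      filter_upwards [self_mem_nhdsWithin] with z hz
      exact (hIco z hz).symm
    exact tendsto_nhds_unique h1 h2
  · exact hIco t ⟨ht.1, hTt⟩
end

section
/- Let M ⊂ ℝ² be a bounded domain, q : [0,T] → L^p(M) (p > 1) a map such that (i) q(·,τ₂) converges weakly to q(·,τ₁) in L^p(M) as τ₂ → τ₁, and (ii) ‖q(·,τ₂)‖_{L^p} ≤ ‖q(·,τ₁)‖_{L^p} + ∫_{τ₁}^{τ₂} g(t) dt for an integrable function g ≥ 0 and all τ₁ ≤ τ₂. Then q is strongly continuous from the right: q(·,τ₂) → q(·,τ₁) in L^p-norm as τ₂ → τ₁⁺. -/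
open MeasureTheory Filter
open scoped ENNReal Topology

lemma rr_convex {r : ℝ} (hr : 1 ≤ r) (a b : ℝ) :
    2 * |(a + b) / 2| ^ r ≤ |a| ^ r + |b| ^ r := by
  have h1 : |(a + b) / 2| ^ r ≤ ((1/2 : ℝ) * |a| + (1/2 : ℝ) * |b|) ^ r := by
    apply Real.rpow_le_rpow (abs_nonneg _) _ (by linarith)
    rw [abs_div, abs_two]
    have := abs_add_le a b
    linarith
  have h2 := (convexOn_rpow hr).2 (Set.mem_Ici.2 (abs_nonneg a))
    (Set.mem_Ici.2 (abs_nonneg b)) (by norm_num : (0:ℝ) ≤ 1/2) (by norm_num : (0:ℝ) ≤ 1/2)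
    (by norm_num)
  simp only [smul_eq_mul] at h2
  nlinarith [h1.trans h2]

lemma rr_strict {r : ℝ} (hr : 1 < r) {a b : ℝ} (hab : a ≠ b) :
    2 * |(a + b) / 2| ^ r < |a| ^ r + |b| ^ r := by
  rcases eq_or_ne |a| |b| with h | h
  · have hb : b = -a := by
      rcases abs_eq_abs.1 h with h1 | h1
      · exact absurd h1 hab
      · linarith
    have ha : a ≠ 0 := by rintro rfl; simp at hb; exact hab (by simp [hb])
    subst hb
    rw [add_neg_cancel, zero_div, abs_zero, Real.zero_rpow (by positivity), abs_neg]
    have : 0 < |a| ^ r := Real.rpow_pos_of_pos (abs_pos.2 ha) r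
    linarith
  · have h1 : |(a + b) / 2| ^ r ≤ ((1/2 : ℝ) * |a| + (1/2 : ℝ) * |b|) ^ r := by
      apply Real.rpow_le_rpow (abs_nonneg _) _ (by linarith)
      rw [abs_div, abs_two]
      have := abs_add_le a b
      linarith
    have h2 := (strictConvexOn_rpow hr).2 (Set.mem_Ici.2 (abs_nonneg a))
      (Set.mem_Ici.2 (abs_nonneg b)) h (by norm_num : (0:ℝ) < 1/2) (by norm_num : (0:ℝ) < 1/2)
      (by norm_num)
    simp only [smul_eq_mul] at h2
    nlinarith [h1.trans_lt h2]

lemma rr_key {r : ℝ} (hr : 1 < r) {ε : ℝ} (hε : 0 < ε) :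
    ∃ δ : ℝ, 0 < δ ∧ δ ≤ 1 ∧ ∀ a b : ℝ, ε * (|a| ^ r + |b| ^ r) ≤ |a - b| ^ r →
      2 * |(a + b) / 2| ^ r ≤ (1 - δ) * (|a| ^ r + |b| ^ r) := by
  have hr0 : (0:ℝ) < r := lt_trans zero_lt_one hr
  set S : Set (ℝ × ℝ) := {x | |x.1| ^ r + |x.2| ^ r = 1 ∧ ε ≤ |x.1 - x.2| ^ r} with hS
  set F : ℝ × ℝ → ℝ := fun x => 2 * |(x.1 + x.2) / 2| ^ r with hF
  have habs : ∀ f : ℝ × ℝ → ℝ, Continuous f → Continuous fun x => |f x| ^ r := by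
    intro f hf
    exact (hf.abs).rpow_const (fun x => Or.inr hr0.le)
  have hcont1 : Continuous fun x : ℝ × ℝ => |x.1| ^ r + |x.2| ^ r :=
    (habs _ continuous_fst).add (habs _ continuous_snd)
  have hcont2 : Continuous fun x : ℝ × ℝ => |x.1 - x.2| ^ r :=
    habs _ (continuous_fst.sub continuous_snd)
  have hcontF : Continuous F :=
    continuous_const.mul (habs _ ((continuous_fst.add continuous_snd).div_const 2))
  have hclosed : IsClosed S :=
    (isClosed_eq hcont1 continuous_const).inter (isClosed_le continuous_const hcont2)
  have hbd : ∀ x ∈ S, |x.1| ≤ 1 ∧ |x.2| ≤ 1 := by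
    intro x hx
    constructor <;> by_contra h <;> push_neg at h
    · have h1 : (1:ℝ) < |x.1| ^ r := by
        calc (1:ℝ) = 1 ^ r := (Real.one_rpow r).symm
          _ < |x.1| ^ r := Real.rpow_lt_rpow (by norm_num) h hr0
      have h2 : (0:ℝ) ≤ |x.2| ^ r := Real.rpow_nonneg (abs_nonneg _) r
      have := hx.1; linarith
    · have h1 : (1:ℝ) < |x.2| ^ r := by
        calc (1:ℝ) = 1 ^ r := (Real.one_rpow r).symm
          _ < |x.2| ^ r := Real.rpow_lt_rpow (by norm_num) h hr0
      have h2 : (0:ℝ) ≤ |x.1| ^ r := Real.rpow_nonneg (abs_nonneg _) r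
      have := hx.1; linarith
  have hcompact : IsCompact S := by
    refine IsCompact.of_isClosed_subset (isCompact_Icc (a := ((-1 : ℝ), (-1 : ℝ))) (b := (1, 1)))
      hclosed ?_
    intro x hx
    obtain ⟨h1, h2⟩ := hbd x hx
    rw [abs_le] at h1 h2
    exact ⟨⟨h1.1, h2.1⟩, ⟨h1.2, h2.2⟩⟩
  obtain ⟨δ, hδ0, hδ1, hSδ⟩ : ∃ δ : ℝ, 0 < δ ∧ δ ≤ 1 ∧ ∀ x ∈ S, F x ≤ 1 - δ := by
    by_cases hne : S.Nonempty
    · obtain ⟨z, hzS, hzmax⟩ := hcompact.exists_isMaxOn hne hcontF.continuousOn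
      have hzne : z.1 ≠ z.2 := by
        intro hh
        have : ε ≤ (0:ℝ) := by
          have := hzS.2
          rwa [hh, sub_self, abs_zero, Real.zero_rpow hr0.ne'] at this
        linarith
      have hz1 : F z < 1 := by
        have := rr_strict hr hzne
        rw [hzS.1] at this
        exact this
      have hzF : 0 ≤ F z := by
        have : (0:ℝ) ≤ |(z.1 + z.2)/2| ^ r := Real.rpow_nonneg (abs_nonneg _) r
        simp only [hF]; linarith
      exact ⟨1 - F z, by linarith, by linarith, fun x hx => by
        have := hzmax hx; simpa using this⟩
    · exact ⟨1, one_pos, le_refl 1, fun x hx => absurd ⟨x, hx⟩ hne⟩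
  refine ⟨δ, hδ0, hδ1, ?_⟩
  intro a b hab
  set s : ℝ := |a| ^ r + |b| ^ r with hs
  have hs0 : 0 ≤ s :=
    add_nonneg (Real.rpow_nonneg (abs_nonneg _) r) (Real.rpow_nonneg (abs_nonneg _) r)
  rcases eq_or_lt_of_le hs0 with hs0' | hs0'
  · have ha : |a| ^ r = 0 := by
      have h2 : (0:ℝ) ≤ |b| ^ r := Real.rpow_nonneg (abs_nonneg _) r
      have h1 : (0:ℝ) ≤ |a| ^ r := Real.rpow_nonneg (abs_nonneg _) r
      linarith [hs0'.symm ▸ (rfl : s = s)]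
    have hb : |b| ^ r = 0 := by
      have h1 : (0:ℝ) ≤ |a| ^ r := Real.rpow_nonneg (abs_nonneg _) r
      linarith [hs0'.symm ▸ (rfl : s = s)]
    have ha' : a = 0 := by
      have := (Real.rpow_eq_zero_iff_of_nonneg (abs_nonneg a)).1 ha
      simpa [abs_eq_zero] using this.1
    have hb' : b = 0 := by
      have := (Real.rpow_eq_zero_iff_of_nonneg (abs_nonneg b)).1 hb
      simpa [abs_eq_zero] using this.1
    subst ha'; subst hb'
    norm_num [Real.zero_rpow hr0.ne']
    simp [← hs0']
  · set c : ℝ := s ^ r⁻¹ with hc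
    have hc0 : 0 < c := Real.rpow_pos_of_pos hs0' _
    have hcr : c ^ r = s := Real.rpow_inv_rpow hs0 hr0.ne'
    have key : ∀ u : ℝ, |u / c| ^ r = |u| ^ r / s := by
      intro u
      rw [abs_div, abs_of_pos hc0, Real.div_rpow (abs_nonneg u) hc0.le, hcr]
    have hmem : ((a / c, b / c) : ℝ × ℝ) ∈ S := by
      constructor
      · simp only [key]
        field_simp
        exact hs.symm
      · simp only []
        have : a / c - b / c = (a - b) / c := by ring
        rw [this, key]
        rw [le_div_iff₀ hs0']
        calc ε * s = ε * (|a| ^ r + |b| ^ r) := by rw [hs]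
          _ ≤ |a - b| ^ r := hab
    have := hSδ _ hmem
    simp only [hF] at this
    have hmid : (a / c + b / c) / 2 = ((a + b) / 2) / c := by ring
    rw [hmid, key] at this
    calc 2 * |(a + b) / 2| ^ r = (2 * (|(a + b) / 2| ^ r / s)) * s := by
          field_simp
      _ ≤ (1 - δ) * s := by
          apply mul_le_mul_of_nonneg_right this hs0
      _ = (1 - δ) * (|a| ^ r + |b| ^ r) := by rw [hs]

lemma rr_star {r : ℝ} (hr : 1 < r) {ε : ℝ} (hε : 0 < ε) :
    ∃ C : ℝ, 0 < C ∧ ∀ a b : ℝ, |a - b| ^ r ≤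
      ε * (|a| ^ r + |b| ^ r) + C * (|a| ^ r + |b| ^ r - 2 * |(a + b) / 2| ^ r) := by
  obtain ⟨δ, hδ0, hδ1, hkey⟩ := rr_key hr hε
  have h2r : (0:ℝ) < (2:ℝ) ^ (r - 1) := Real.rpow_pos_of_pos two_pos _
  refine ⟨2 ^ (r - 1) / δ, by positivity, ?_⟩
  intro a b
  have hbr0 : 0 ≤ |a| ^ r + |b| ^ r - 2 * |(a + b) / 2| ^ r := by
    have := rr_convex hr.le a b; linarith
  have hS0 : 0 ≤ |a| ^ r + |b| ^ r :=
    add_nonneg (Real.rpow_nonneg (abs_nonneg _) r) (Real.rpow_nonneg (abs_nonneg _) r)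
  have hdb : |a - b| ^ r ≤ 2 ^ (r - 1) * (|a| ^ r + |b| ^ r) := by
    have h := rr_convex hr.le a (-b)
    rw [abs_neg] at h
    have he : |(a + -b) / 2| ^ r = |a - b| ^ r / 2 ^ r := by
      rw [show (a + -b) / 2 = (a - b)/2 by ring, abs_div, abs_two,
        Real.div_rpow (abs_nonneg _) (by norm_num)]
    rw [he] at h
    have h2 : (2:ℝ) ^ (r - 1) = 2 ^ r / 2 := by
      rw [Real.rpow_sub two_pos, Real.rpow_one]
    have h2r' : (0:ℝ) < (2:ℝ) ^ r := Real.rpow_pos_of_pos two_pos r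
    have hd : |a - b| ^ r / 2 ^ r * 2 ≤ |a| ^ r + |b| ^ r := by linarith
    rw [div_mul_eq_mul_div, div_le_iff₀ h2r'] at hd
    rw [h2]
    nlinarith [hd]
  rcases le_total (|a - b| ^ r) (ε * (|a| ^ r + |b| ^ r)) with h | h
  · nlinarith [mul_nonneg (le_of_lt (div_pos h2r hδ0)) hbr0]
  · have h2 := hkey a b h
    have hbr : δ * (|a| ^ r + |b| ^ r) ≤ |a| ^ r + |b| ^ r - 2 * |(a + b) / 2| ^ r := by
      nlinarith [hS0]
    have h3 : 2 ^ (r - 1) / δ * (δ * (|a| ^ r + |b| ^ r)) = 2 ^ (r - 1) * (|a| ^ r + |b| ^ r) := by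
      field_simp
    nlinarith [mul_le_mul_of_nonneg_left hbr (le_of_lt (div_pos h2r hδ0)),
      mul_nonneg hε.le hS0]

lemma rr_sign_measurable : Measurable Real.sign := by
  have : Real.sign = fun r : ℝ => if r < 0 then (-1:ℝ) else if 0 < r then 1 else 0 := by
    funext r; rfl
  rw [this]
  exact Measurable.ite measurableSet_Iio measurable_const
    (Measurable.ite measurableSet_Ioi measurable_const measurable_const)

/-- Radon–Riesz upgrade: if `q : [0,T] → L^p(M)` (`1 < p < ∞`) is weakly continuous in
time and satisfies `‖q(·,τ₂)‖_p ≤ ‖q(·,τ₁)‖_p + ∫_{τ₁}^{τ₂} g` for `τ₁ ≤ τ₂`, then `q`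
is strongly right-continuous in `L^p(M)`. -/
theorem stmt15 (T : ℝ) (hT : 0 < T)
    (M : Set (Fin 2 → ℝ)) (hMmeas : MeasurableSet M) (hMbdd : Bornology.IsBounded M)
    (μ : Measure (Fin 2 → ℝ)) (hμ : μ = MeasureTheory.volume.restrict M)
    (p p' : ℝ≥0∞) (hp : 1 < p) (hptop : p ≠ ⊤) (hpp' : 1 / p + 1 / p' = 1)
    (q : ℝ → (Fin 2 → ℝ) → ℝ)
    (hqLp : ∀ τ ∈ Set.Icc 0 T, MemLp (q τ) p μ)
    (hweak : ∀ τ₁ ∈ Set.Icc 0 T, ∀ g : (Fin 2 → ℝ) → ℝ, MemLp g p' μ →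
      Tendsto (fun τ₂ => ∫ x, q τ₂ x * g x ∂μ)
        (nhdsWithin τ₁ (Set.Icc 0 T)) (nhds (∫ x, q τ₁ x * g x ∂μ)))
    (g : ℝ → ℝ) (hgnonneg : ∀ t, 0 ≤ g t) (hgint : IntegrableOn g (Set.Icc 0 T))
    (hnorm : ∀ τ₁ ∈ Set.Icc 0 T, ∀ τ₂ ∈ Set.Icc 0 T, τ₁ ≤ τ₂ →
      (eLpNorm (q τ₂) p μ).toReal ≤
        (eLpNorm (q τ₁) p μ).toReal + ∫ t in τ₁..τ₂, g t) :
    ∀ τ₁ ∈ Set.Ico 0 T,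
      Tendsto (fun τ₂ => (eLpNorm (fun x => q τ₂ x - q τ₁ x) p μ).toReal)
        (nhdsWithin τ₁ (Set.Ioi τ₁)) (nhds 0) := by
  intro τ₁ hτ₁
  obtain ⟨hτ₁0, hτ₁T⟩ := hτ₁
  have hτ₁Icc : τ₁ ∈ Set.Icc 0 T := ⟨hτ₁0, hτ₁T.le⟩
  -- exponents
  have hp0 : p ≠ 0 := (zero_lt_one.trans hp).ne'
  set r : ℝ := p.toReal with hrdef
  have hr1 : 1 < r := by
    have := (ENNReal.toReal_lt_toReal (by simp) hptop).2 hp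
    simpa using this
  have hr0 : (0:ℝ) < r := zero_lt_one.trans hr1
  have hPconj : p.HolderConjugate p' := ⟨by simpa [one_div] using hpp'⟩
  have hp'0 : p' ≠ 0 := ENNReal.HolderConjugate.ne_zero p' p
  have hp'top : p' ≠ ⊤ := by
    have h1 : (1:ℝ≥0∞) - p⁻¹ = p'⁻¹ := ENNReal.HolderConjugate.one_sub_inv p p'
    have h2 : p⁻¹ < 1 := by
      rw [ENNReal.inv_lt_one]; exact hp
    have h3 : p'⁻¹ ≠ 0 := by rw [← h1]; exact (tsub_pos_of_lt h2).ne'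
    simpa [ENNReal.inv_ne_zero] using h3
  set r' : ℝ := p'.toReal with hr'def
  have hconj : r.HolderConjugate r' := by
    rw [Real.holderConjugate_iff]
    constructor
    · exact hr1
    · have h := congrArg ENNReal.toReal hpp'
      rw [ENNReal.toReal_add, ENNReal.toReal_div, ENNReal.toReal_div] at h
      · simpa using h
      · simp [ENNReal.div_eq_top, hp0]
      · simp [ENNReal.div_eq_top, hp'0]
  have hr'0 : (0:ℝ) < r' := hconj.symm.pos
  -- filters
  set l : Filter ℝ := nhdsWithin τ₁ (Set.Ioi τ₁) with hl
  have hlIoo : l = nhdsWithin τ₁ (Set.Ioo τ₁ T) := (nhdsWithin_Ioo_eq_nhdsGT hτ₁T).symm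
  have hlIcc : l ≤ nhdsWithin τ₁ (Set.Icc 0 T) := by
    rw [hlIoo]
    exact nhdsWithin_mono _ (fun x hx => ⟨hτ₁0.trans hx.1.le, hx.2.le⟩)
  have hev : ∀ᶠ τ₂ in l, τ₂ ∈ Set.Ioo τ₁ T := by
    rw [hlIoo]; exact self_mem_nhdsWithin
  have hevIcc : ∀ᶠ τ₂ in l, τ₂ ∈ Set.Icc 0 T :=
    hev.mono (fun x hx => ⟨hτ₁0.trans hx.1.le, hx.2.le⟩)
  -- the interval integral of g tends to 0
  have hG : Tendsto (fun τ₂ => ∫ t in τ₁..τ₂, g t) l (𝓝 0) := by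
    have hint : IntegrableOn g (Set.Icc τ₁ T) :=
      hgint.mono_set (Set.Icc_subset_Icc hτ₁0 le_rfl)
    have hcont := (intervalIntegral.continuousOn_primitive hint) τ₁ (Set.left_mem_Icc.2 hτ₁T.le)
    have h0 : (∫ t in Set.Ioc τ₁ τ₁, g t) = 0 := by simp
    have hle : l ≤ nhdsWithin τ₁ (Set.Icc τ₁ T) := by
      rw [hlIoo]; exact nhdsWithin_mono _ Set.Ioo_subset_Icc_self
    have h1 : Tendsto (fun x => ∫ t in Set.Ioc τ₁ x, g t) l (𝓝 0) := by
      rw [← h0]; exact hcont.tendsto.mono_left hle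
    apply h1.congr'
    filter_upwards [hev] with x hx
    rw [intervalIntegral.integral_of_le hx.1.le]
  -- the integrals of |q|^r
  set A : ℝ → ℝ := fun τ => ∫ x, ‖q τ x‖ ^ r ∂μ with hA
  have hA0 : ∀ τ, 0 ≤ A τ :=
    fun τ => integral_nonneg (fun x => Real.rpow_nonneg (norm_nonneg _) r)
  have hNA : ∀ τ, MemLp (q τ) p μ → (eLpNorm (q τ) p μ).toReal = A τ ^ r⁻¹ := by
    intro τ h
    rw [h.eLpNorm_eq_integral_rpow_norm hp0 hptop,
      ENNReal.toReal_ofReal (Real.rpow_nonneg (hA0 τ) _)]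
  have hint_r : ∀ τ, MemLp (q τ) p μ → Integrable (fun x => ‖q τ x‖ ^ r) μ :=
    fun τ h => h.integrable_norm_rpow hp0 hptop
  have hq1 : MemLp (q τ₁) p μ := hqLp τ₁ hτ₁Icc
  have hub : ∀ᶠ τ₂ in l, A τ₂ ^ r⁻¹ ≤ A τ₁ ^ r⁻¹ + ∫ t in τ₁..τ₂, g t := by
    filter_upwards [hev, hevIcc] with τ₂ h2 h2I
    have := hnorm τ₁ hτ₁Icc τ₂ h2I h2.1.le
    rwa [hNA τ₁ hq1, hNA τ₂ (hqLp τ₂ h2I)] at this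
  have hUconv : Tendsto (fun τ₂ => A τ₁ ^ r⁻¹ + ∫ t in τ₁..τ₂, g t) l (𝓝 (A τ₁ ^ r⁻¹)) := by
    have := tendsto_const_nhds.add hG (f := fun _ : ℝ => A τ₁ ^ r⁻¹) (x := l)
    simpa using this
  rcases eq_or_lt_of_le (hA0 τ₁) with hA₁ | hA₁
  · -- the case where q τ₁ vanishes a.e.
    have hae : ∀ᵐ x ∂μ, q τ₁ x = 0 := by
      have h := (integral_eq_zero_iff_of_nonneg_ae
        (Eventually.of_forall (fun x => Real.rpow_nonneg (norm_nonneg (q τ₁ x)) r))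
        (hint_r τ₁ hq1)).1 hA₁.symm
      filter_upwards [h] with x hx
      have := (Real.rpow_eq_zero_iff_of_nonneg (norm_nonneg (q τ₁ x))).1 hx
      simpa using this.1
    have hEq : ∀ᶠ τ₂ in l,
        (eLpNorm (fun x => q τ₂ x - q τ₁ x) p μ).toReal = A τ₂ ^ r⁻¹ := by
      filter_upwards [hevIcc] with τ₂ h2
      have heq : (fun x => q τ₂ x - q τ₁ x) =ᵐ[μ] q τ₂ := by
        filter_upwards [hae] with x hx; simp [hx]
      rw [eLpNorm_congr_ae heq, hNA τ₂ (hqLp τ₂ h2)]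
    have h0' : A τ₁ ^ r⁻¹ = 0 := by
      rw [← hA₁, Real.zero_rpow (inv_ne_zero hr0.ne')]
    have hNt : Tendsto (fun τ₂ => A τ₂ ^ r⁻¹) l (𝓝 0) := by
      rw [← h0']
      apply tendsto_of_tendsto_of_tendsto_of_le_of_le' ?_ hUconv
        (Eventually.of_forall (fun τ₂ => Real.rpow_nonneg (hA0 τ₂) _)) hub
      rw [h0']; exact tendsto_const_nhds
    exact Tendsto.congr' (EventuallyEq.symm hEq) hNt
  · -- main case : A τ₁ > 0
    set g₀ : (Fin 2 → ℝ) → ℝ := fun x => Real.sign (q τ₁ x) * ‖q τ₁ x‖ ^ (r - 1) with hg₀def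
    have hfact1 : ∀ y : ℝ, y * (Real.sign y * ‖y‖ ^ (r - 1)) = ‖y‖ ^ r := by
      intro y
      rcases lt_trichotomy y 0 with h | h | h
      · rw [Real.sign_of_neg h, Real.norm_eq_abs, abs_of_neg h]
        have h0 : 0 < -y := neg_pos.2 h
        have he : (-y) ^ r = (-y) ^ (1:ℝ) * (-y) ^ (r - 1) := by
          rw [← Real.rpow_add h0]; norm_num
        rw [he, Real.rpow_one]; ring
      · simp [h, Real.sign_zero, Real.zero_rpow hr0.ne']
      · rw [Real.sign_of_pos h, Real.norm_eq_abs, abs_of_pos h]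
        have he : y ^ r = y ^ (1:ℝ) * y ^ (r - 1) := by
          rw [← Real.rpow_add h]; norm_num
        rw [he, Real.rpow_one]; ring
    have hfact2 : ∀ y : ℝ, ‖Real.sign y * ‖y‖ ^ (r - 1)‖ ≤ ‖‖y‖ ^ (r - 1)‖ := by
      intro y
      rw [norm_mul]
      have h1 : ‖Real.sign y‖ ≤ 1 := by
        rcases Real.sign_apply_eq y with h | h | h <;> rw [h] <;> norm_num
      nlinarith [norm_nonneg (‖y‖ ^ (r - 1)), norm_nonneg (Real.sign y)]
    have hfact3 : ∀ y : ℝ, ‖Real.sign y * ‖y‖ ^ (r - 1)‖ ^ r' = ‖y‖ ^ r := by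
      intro y
      rcases eq_or_ne y 0 with rfl | h
      · rw [norm_zero, Real.zero_rpow (by linarith : r - 1 ≠ 0), Real.sign_zero]
        rw [mul_zero, norm_zero, Real.zero_rpow hr'0.ne', Real.zero_rpow hr0.ne']
      · have hs : ‖Real.sign y‖ = 1 := by
          rcases Real.sign_apply_eq_of_ne_zero y h with h' | h' <;> simp [h']
        rw [norm_mul, hs, one_mul,
          Real.norm_of_nonneg (Real.rpow_nonneg (norm_nonneg y) _),
          ← Real.rpow_mul (norm_nonneg y), hconj.sub_one_mul_conj]
    have hg₀meas : AEStronglyMeasurable g₀ μ := by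
      have h1 : AEMeasurable (q τ₁) μ := hq1.aestronglyMeasurable.aemeasurable
      have h2 : AEMeasurable (fun x => Real.sign (q τ₁ x)) μ :=
        rr_sign_measurable.comp_aemeasurable h1
      have h3 : AEMeasurable (fun x => ‖q τ₁ x‖ ^ (r - 1)) μ := by
        have hcont : Continuous (fun y : ℝ => |y| ^ (r - 1)) :=
          continuous_abs.rpow_const (fun _ => Or.inr (by linarith))
        have := hcont.measurable.comp_aemeasurable h1
        simpa [Real.norm_eq_abs, Function.comp_def] using this
      exact (h2.mul h3).aestronglyMeasurable
    have hg₀mem : MemLp g₀ p' μ := by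
      have hpp'0 : p / p' ≠ 0 := by
        simp [ENNReal.div_eq_zero_iff, hp0, hp'top]
      have he1 : (p / p').toReal = r - 1 := by
        rw [ENNReal.toReal_div]; exact hconj.div_conj_eq_sub_one
      have he2 : p / (p / p') = p' := by
        have hPtop : p / (p / p') ≠ ⊤ := by
          simp [ENNReal.div_eq_top, hptop, hpp'0]
        rw [← ENNReal.toReal_eq_toReal_iff' hPtop hp'top, ENNReal.toReal_div, he1]
        have := hconj.conjugate_eq
        rw [← hr'def]
        field_simp [this]
        rw [this, hrdef]
      have hdom : MemLp (fun x => ‖q τ₁ x‖ ^ (r - 1)) p' μ := by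
        have h1 := hq1.norm_rpow_div (p / p')
        rw [he1, he2] at h1
        exact h1
      exact MemLp.of_le hdom hg₀meas (Eventually.of_forall fun x => hfact2 _)
    have hA₁r' : (0:ℝ) < A τ₁ ^ (1/r') := Real.rpow_pos_of_pos hA₁ _
    have hg₀int : ∫ x, ‖g₀ x‖ ^ r' ∂μ = A τ₁ :=
      integral_congr_ae (Eventually.of_forall fun x => hfact3 _)
    -- integrability of products with g₀
    have hmul : ∀ h : (Fin 2 → ℝ) → ℝ, MemLp h p μ →
        Integrable (fun x => h x * g₀ x) μ := by
      intro h hh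
      have hs : MemLp (g₀ • h) 1 μ := by
        apply hh.smul hg₀mem
      have := memLp_one_iff_integrable.1 hs
      exact this.congr (Eventually.of_forall fun x => by
        simp [Pi.smul_apply, smul_eq_mul, mul_comm])
    -- Hölder inequality against g₀
    have hHolder : ∀ h : (Fin 2 → ℝ) → ℝ, MemLp h p μ →
        (∫ x, h x * g₀ x ∂μ) ≤ (∫ x, ‖h x‖ ^ r ∂μ) ^ (1/r) * (A τ₁) ^ (1/r') := by
      intro h hh
      have hint1 : Integrable (fun x => h x * g₀ x) μ := hmul h hh
      have hint2 : Integrable (fun x => ‖h x‖ * ‖g₀ x‖) μ := by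
        apply hint1.norm.congr
        exact Eventually.of_forall fun x => by simp [norm_mul]
      calc ∫ x, h x * g₀ x ∂μ ≤ ∫ x, ‖h x‖ * ‖g₀ x‖ ∂μ := by
            apply integral_mono hint1 hint2
            intro x
            calc h x * g₀ x ≤ |h x * g₀ x| := le_abs_self _
              _ = ‖h x‖ * ‖g₀ x‖ := by simp [abs_mul]
        _ ≤ (∫ x, ‖h x‖ ^ r ∂μ) ^ (1/r) * (∫ x, ‖g₀ x‖ ^ r' ∂μ) ^ (1/r') := by
            apply integral_mul_le_Lp_mul_Lq_of_nonneg hconj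
              (Eventually.of_forall fun x => norm_nonneg _)
              (Eventually.of_forall fun x => norm_nonneg _) ?_ ?_
            · rw [show ENNReal.ofReal r = p from by rw [hrdef, ENNReal.ofReal_toReal hptop]]
              exact hh.norm
            · rw [show ENNReal.ofReal r' = p' from by rw [hr'def, ENNReal.ofReal_toReal hp'top]]
              exact hg₀mem.norm
        _ = (∫ x, ‖h x‖ ^ r ∂μ) ^ (1/r) * (A τ₁) ^ (1/r') := by rw [hg₀int]
    -- weak convergence of the pairing
    set P : ℝ → ℝ := fun τ₂ => ∫ x, q τ₂ x * g₀ x ∂μ with hP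
    have hP₁ : P τ₁ = A τ₁ := integral_congr_ae (Eventually.of_forall fun x => hfact1 _)
    have hPconv : Tendsto P l (𝓝 (A τ₁)) := by
      rw [← hP₁]
      exact (hweak τ₁ hτ₁Icc g₀ hg₀mem).mono_left hlIcc
    have hinvsub : (1:ℝ) - 1/r' = r⁻¹ := by
      have := hconj.inv_add_inv_eq_one
      rw [one_div]; linarith
    have hdivA : A τ₁ / A τ₁ ^ (1/r') = A τ₁ ^ r⁻¹ := by
      rw [← hinvsub, Real.rpow_sub hA₁, Real.rpow_one]
    -- convergence of the norms
    have hNconv : Tendsto (fun τ₂ => A τ₂ ^ r⁻¹) l (𝓝 (A τ₁ ^ r⁻¹)) := by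
      have hlow : ∀ᶠ τ₂ in l, P τ₂ / A τ₁ ^ (1/r') ≤ A τ₂ ^ r⁻¹ := by
        filter_upwards [hevIcc] with τ₂ h2
        rw [div_le_iff₀ hA₁r']
        have := hHolder (q τ₂) (hqLp τ₂ h2)
        rw [one_div] at this
        exact this
      have hlowconv : Tendsto (fun τ₂ => P τ₂ / A τ₁ ^ (1/r')) l (𝓝 (A τ₁ ^ r⁻¹)) := by
        have h := hPconv.div_const (A τ₁ ^ (1/r'))
        rwa [hdivA] at h
      exact tendsto_of_tendsto_of_tendsto_of_le_of_le' hlowconv hUconv hlow hub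
    have hAconv : Tendsto A l (𝓝 (A τ₁)) := by
      have hcontr : ContinuousAt (fun x : ℝ => x ^ r) (A τ₁ ^ r⁻¹) :=
        Real.continuousAt_rpow_const _ _ (Or.inr hr0.le)
      have h := hcontr.tendsto.comp hNconv
      rw [Real.rpow_inv_rpow (hA0 τ₁) hr0.ne'] at h
      exact h.congr (fun τ₂ => Real.rpow_inv_rpow (hA0 τ₂) hr0.ne')
    -- midpoints
    set m : ℝ → (Fin 2 → ℝ) → ℝ := fun τ₂ x => (q τ₂ x + q τ₁ x) / 2 with hm
    set B : ℝ → ℝ := fun τ₂ => ∫ x, ‖m τ₂ x‖ ^ r ∂μ with hB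
    have hmmem : ∀ τ₂ ∈ Set.Icc 0 T, MemLp (m τ₂) p μ := by
      intro τ₂ h2
      have h := ((hqLp τ₂ h2).add hq1).const_mul (1/2 : ℝ)
      have he : m τ₂ = fun x => (1/2 : ℝ) * ((q τ₂ + q τ₁) x) := by
        funext x; simp [hm, Pi.add_apply]; ring
      rw [he]
      exact h
    have hB0 : ∀ τ₂, 0 ≤ B τ₂ :=
      fun τ₂ => integral_nonneg fun x => Real.rpow_nonneg (norm_nonneg _) _
    have hQ : ∀ᶠ τ₂ in l, ∫ x, m τ₂ x * g₀ x ∂μ = (P τ₂ + A τ₁) / 2 := by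
      filter_upwards [hevIcc] with τ₂ h2
      have hi2 : Integrable (fun x => q τ₂ x * g₀ x) μ := hmul _ (hqLp τ₂ h2)
      have hi1 : Integrable (fun x => q τ₁ x * g₀ x) μ := hmul _ hq1
      have he : ∫ x, m τ₂ x * g₀ x ∂μ
          = ∫ x, (1/2) * (q τ₂ x * g₀ x) + (1/2) * (q τ₁ x * g₀ x) ∂μ := by
        apply integral_congr_ae (Eventually.of_forall fun x => ?_)
        simp only [hm]; ring
      rw [he, integral_add (hi2.const_mul _) (hi1.const_mul _),
        integral_const_mul, integral_const_mul]
      have : (∫ x, q τ₁ x * g₀ x ∂μ) = A τ₁ := hP₁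
      rw [this]
      ring
    have hQconv : Tendsto (fun τ₂ => (P τ₂ + A τ₁) / 2) l (𝓝 (A τ₁)) := by
      have h := (hPconv.add_const (A τ₁)).div_const 2
      have he : (A τ₁ + A τ₁) / 2 = A τ₁ := by ring
      rwa [he] at h
    have hBlow : ∀ᶠ τ₂ in l, ((P τ₂ + A τ₁) / 2 / A τ₁ ^ (1/r')) ^ r ≤ B τ₂ := by
      have hQev : ∀ᶠ τ₂ in l, 0 < (P τ₂ + A τ₁) / 2 := hQconv.eventually_const_lt hA₁
      filter_upwards [hevIcc, hQev, hQ] with τ₂ h2 hQpos hQeq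
      have hH := hHolder (m τ₂) (hmmem τ₂ h2)
      rw [hQeq] at hH
      have h1 : (P τ₂ + A τ₁) / 2 / A τ₁ ^ (1/r') ≤ B τ₂ ^ (1/r) := by
        rw [div_le_iff₀ hA₁r']; exact hH
      calc ((P τ₂ + A τ₁) / 2 / A τ₁ ^ (1/r')) ^ r ≤ (B τ₂ ^ (1/r)) ^ r :=
            Real.rpow_le_rpow (by positivity) h1 hr0.le
        _ = B τ₂ := by rw [one_div]; exact Real.rpow_inv_rpow (hB0 τ₂) hr0.ne'
    have hBlowconv :
        Tendsto (fun τ₂ => ((P τ₂ + A τ₁) / 2 / A τ₁ ^ (1/r')) ^ r) l (𝓝 (A τ₁)) := by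
      have h1 := hQconv.div_const (A τ₁ ^ (1/r'))
      have h2 := h1.rpow_const (p := r) (Or.inr hr0.le)
      have he : (A τ₁ / A τ₁ ^ (1/r')) ^ r = A τ₁ := by
        rw [hdivA]; exact Real.rpow_inv_rpow (hA0 τ₁) hr0.ne'
      rwa [he] at h2
    -- final ε-argument
    have hEqfinal : ∀ᶠ τ₂ in l,
        (eLpNorm (fun x => q τ₂ x - q τ₁ x) p μ).toReal
          = (∫ x, ‖q τ₂ x - q τ₁ x‖ ^ r ∂μ) ^ r⁻¹ := by
      filter_upwards [hevIcc] with τ₂ h2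
      have hsub : MemLp (fun x => q τ₂ x - q τ₁ x) p μ := (hqLp τ₂ h2).sub hq1
      rw [hsub.eLpNorm_eq_integral_rpow_norm hp0 hptop,
        ENNReal.toReal_ofReal (Real.rpow_nonneg
          (integral_nonneg fun x => Real.rpow_nonneg (norm_nonneg _) _) _)]
    set I : ℝ → ℝ := fun τ₂ => ∫ x, ‖q τ₂ x - q τ₁ x‖ ^ r ∂μ with hI
    have hI0 : ∀ τ₂, 0 ≤ I τ₂ :=
      fun τ₂ => integral_nonneg fun x => Real.rpow_nonneg (norm_nonneg _) _
    have hIconv : Tendsto I l (𝓝 0) := by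
      refine tendsto_order.2 ⟨fun b hb => ?_, fun b hb => ?_⟩
      · exact Eventually.of_forall fun τ₂ => lt_of_lt_of_le hb (hI0 τ₂)
      · set ε : ℝ := b / (2 * (2 * A τ₁ + 2)) with hεdef
        have hA₁0 := hA0 τ₁
        have hεpos : 0 < ε := by
          apply div_pos hb
          nlinarith
        obtain ⟨C, hC0, hstar⟩ := rr_star hr1 hεpos
        have hβpos : 0 < b / (8 * C) := by positivity
        have hAev1 : ∀ᶠ τ₂ in l, A τ₂ < A τ₁ + 1 :=
          hAconv.eventually_lt_const (by linarith)
        have hAev2 : ∀ᶠ τ₂ in l, A τ₂ < A τ₁ + b / (8 * C) :=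
          hAconv.eventually_lt_const (by linarith)
        have hBev : ∀ᶠ τ₂ in l, A τ₁ - b / (8 * C)
            < ((P τ₂ + A τ₁) / 2 / A τ₁ ^ (1/r')) ^ r :=
          hBlowconv.eventually_const_lt (by linarith)
        filter_upwards [hevIcc, hAev1, hAev2, hBev, hBlow] with τ₂ h2 hA1 hA2 hB1 hB2
        have hBlb : A τ₁ - b / (8 * C) < B τ₂ := lt_of_lt_of_le hB1 hB2
        -- the main integral inequality
        have hi2 := hint_r τ₂ (hqLp τ₂ h2)
        have hi1 := hint_r τ₁ hq1
        have hsub : MemLp (fun x => q τ₂ x - q τ₁ x) p μ := (hqLp τ₂ h2).sub hq1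
        have hiI : Integrable (fun x => ‖q τ₂ x - q τ₁ x‖ ^ r) μ :=
          hsub.integrable_norm_rpow hp0 hptop
        have him : Integrable (fun x => ‖m τ₂ x‖ ^ r) μ :=
          (hmmem τ₂ h2).integrable_norm_rpow hp0 hptop
        have hIle : I τ₂ ≤ (ε + C) * (A τ₂ + A τ₁) - 2 * C * B τ₂ := by
          have hpt : ∀ x, ‖q τ₂ x - q τ₁ x‖ ^ r
              ≤ (ε + C) * (‖q τ₂ x‖ ^ r + ‖q τ₁ x‖ ^ r) - 2 * C * ‖m τ₂ x‖ ^ r := by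
            intro x
            have h := hstar (q τ₂ x) (q τ₁ x)
            simp only [Real.norm_eq_abs, hm]
            nlinarith [h]
          have hgsum : Integrable (fun x => (ε + C) * (‖q τ₂ x‖ ^ r + ‖q τ₁ x‖ ^ r)) μ :=
            (hi2.add hi1).const_mul _
          have hgm : Integrable (fun x => 2 * C * ‖m τ₂ x‖ ^ r) μ := him.const_mul _
          have hRHS : Integrable (fun x => (ε + C) * (‖q τ₂ x‖ ^ r + ‖q τ₁ x‖ ^ r)
              - 2 * C * ‖m τ₂ x‖ ^ r) μ := hgsum.sub hgm
          calc I τ₂ ≤ ∫ x, ((ε + C) * (‖q τ₂ x‖ ^ r + ‖q τ₁ x‖ ^ r)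
                - 2 * C * ‖m τ₂ x‖ ^ r) ∂μ :=
              integral_mono hiI hRHS hpt
            _ = (ε + C) * (A τ₂ + A τ₁) - 2 * C * B τ₂ := by
              rw [integral_sub hgsum hgm, integral_const_mul, integral_const_mul,
                integral_add hi2 hi1]
        -- conclude with arithmetic
        have e1 : ε * (A τ₂ + A τ₁) ≤ ε * (2 * A τ₁ + 1) :=
          mul_le_mul_of_nonneg_left (by linarith only [hA1]) hεpos.le
        have e2 : ε * (2 * A τ₁ + 1) < b / 2 := by
          have h1 : (0:ℝ) < 2 * (2 * A τ₁ + 2) := by linarith only [hA₁0]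
          rw [hεdef, div_mul_eq_mul_div, div_lt_div_iff₀ h1 two_pos]
          nlinarith only [hb, hA₁0]
        have e3 : C * (A τ₂ + A τ₁ - 2 * B τ₂) ≤ C * (3 * (b / (8 * C))) :=
          mul_le_mul_of_nonneg_left (by linarith only [hA2, hBlb]) hC0.le
        have e4 : C * (3 * (b / (8 * C))) = 3 * b / 8 := by
          field_simp
        have hsplit : (ε + C) * (A τ₂ + A τ₁) - 2 * C * B τ₂
            = ε * (A τ₂ + A τ₁) + C * (A τ₂ + A τ₁ - 2 * B τ₂) := by ring
        linarith only [hIle, e1, e2, e3, e4, hsplit, hb]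
    have hfinal := hIconv.rpow_const (p := r⁻¹) (Or.inr (by positivity))
    rw [Real.zero_rpow (inv_ne_zero hr0.ne')] at hfinal
    exact Tendsto.congr' (EventuallyEq.symm hEqfinal) hfinal
end
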